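/- The subgroup of homeomorphisms of ℝ² generated by h_σ² and v_σ² is a free group on these two generators. -/

import Mathlib

open Set

noncomputable section

def hmap (σ : ℝ ≃ ℝ) : (ℝ × ℝ) ≃ (ℝ × ℝ) where
  toFun p := (p.1 + σ.symm p.2, p.2)
  invFun p := (p.1 - σ.symm p.2, p.2)
  left_inv p := by simp
  right_inv p := by simp

def vmap (σ : ℝ ≃ ℝ) : (ℝ × ℝ) ≃ (ℝ × ℝ) where
  toFun p := (p.1, p.2 + σ p.1)
  invFun p := (p.1, p.2 - σ p.1)
  left_inv p := by simp
  right_inv p := by simp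

def Xset : Set (ℝ × ℝ) := {p | p ≠ 0 ∧ 0 ≤ p.1 * p.2 ∧ p.1 ≠ 0}
def Yset : Set (ℝ × ℝ) := {p | p ≠ 0 ∧ p.1 * p.2 ≤ 0 ∧ p.2 ≠ 0}
def Omeg : Set (ℝ × ℝ) := {p | p ≠ 0}

def ratLines (σ : ℝ ≃ ℝ) : Set (Set (ℝ × ℝ)) :=
  {{p : ℝ × ℝ | p.2 = 0}, {p : ℝ × ℝ | p.1 = 0}} ∪
  ((fun w : Function.End (ℝ × ℝ) => w '' {p : ℝ × ℝ | p.2 = 0}) ''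
    ↑(Submonoid.closure {(⇑(hmap σ) : Function.End (ℝ × ℝ)), ⇑(vmap σ)} : Submonoid (Function.End (ℝ × ℝ)))) ∪
  ((fun w : Function.End (ℝ × ℝ) => w '' {p : ℝ × ℝ | p.1 = 0}) ''
    ↑(Submonoid.closure {(⇑(hmap σ).symm : Function.End (ℝ × ℝ)), ⇑(vmap σ).symm} : Submonoid (Function.End (ℝ × ℝ))))

set_option linter.unusedSectionVars false

namespace PingPongAux

def XH (σ : ℝ ≃ ℝ) : Set (ℝ × ℝ) :=
  {p | (0 < p.2 ∧ σ.symm p.2 < p.1) ∨ (p.2 < 0 ∧ p.1 < σ.symm p.2) ∨ (p.2 = 0 ∧ 0 < p.1)}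
def YH (σ : ℝ ≃ ℝ) : Set (ℝ × ℝ) :=
  {p | (0 < p.2 ∧ p.1 ≤ -σ.symm p.2) ∨ (p.2 < 0 ∧ -σ.symm p.2 ≤ p.1) ∨ (p.2 = 0 ∧ p.1 < 0)}
def XV (σ : ℝ ≃ ℝ) : Set (ℝ × ℝ) :=
  {p | (0 < p.1 ∧ σ p.1 ≤ p.2) ∨ (p.1 < 0 ∧ p.2 ≤ σ p.1) ∨ (p.1 = 0 ∧ 0 < p.2)}
def YV (σ : ℝ ≃ ℝ) : Set (ℝ × ℝ) :=
  {p | (0 < p.1 ∧ p.2 < -σ p.1) ∨ (p.1 < 0 ∧ -σ p.1 < p.2) ∨ (p.1 = 0 ∧ p.2 < 0)}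

variable {σ : ℝ ≃ ℝ} (hm : StrictMono σ) (hodd : ∀ x : ℝ, σ (-x) = -σ x)

include hm hodd

lemma sig_zero : σ 0 = 0 := by have := hodd 0; simp at this; linarith
lemma symm_zero : σ.symm 0 = 0 := by
  conv_lhs => rw [← sig_zero hm hodd]
  exact σ.symm_apply_apply 0
lemma symm_lt (a b : ℝ) : σ.symm a < b ↔ a < σ b := by
  rw [← hm.lt_iff_lt, σ.apply_symm_apply]
lemma lt_symm (a b : ℝ) : a < σ.symm b ↔ σ a < b := by
  rw [← hm.lt_iff_lt, σ.apply_symm_apply]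
lemma symm_le (a b : ℝ) : σ.symm a ≤ b ↔ a ≤ σ b := by
  rw [← hm.le_iff_le, σ.apply_symm_apply]
lemma le_symm (a b : ℝ) : a ≤ σ.symm b ↔ σ a ≤ b := by
  rw [← hm.le_iff_le, σ.apply_symm_apply]
lemma symm_neg (a : ℝ) : σ.symm (-a) = -σ.symm a := by
  apply σ.injective
  rw [σ.apply_symm_apply, hodd, σ.apply_symm_apply]
lemma pos_iff (a : ℝ) : 0 < σ a ↔ 0 < a := by
  have := hm.lt_iff_lt (a := 0) (b := a); rwa [sig_zero hm hodd] at this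
lemma neg_iff (a : ℝ) : σ a < 0 ↔ a < 0 := by
  have := hm.lt_iff_lt (a := a) (b := 0); rwa [sig_zero hm hodd] at this
lemma zero_iff (a : ℝ) : σ a = 0 ↔ a = 0 := by
  conv_lhs => rw [← sig_zero hm hodd]
  exact ⟨fun h => σ.injective h, fun h => by rw [h]⟩
lemma spos_iff (a : ℝ) : 0 < σ.symm a ↔ 0 < a := by
  conv_lhs => rw [← symm_zero hm hodd, ← hm.lt_iff_lt, σ.apply_symm_apply, σ.apply_symm_apply]
lemma sneg_iff (a : ℝ) : σ.symm a < 0 ↔ a < 0 := by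
  conv_lhs => rw [← symm_zero hm hodd, ← hm.lt_iff_lt, σ.apply_symm_apply, σ.apply_symm_apply]

lemma mem_XH_iff (p : ℝ × ℝ) : p ∈ XH σ ↔
    (0 < p.2 ∧ p.2 < σ p.1) ∨ (p.2 < 0 ∧ σ p.1 < p.2) ∨ (p.2 = 0 ∧ 0 < p.1) := by
  rw [XH, Set.mem_setOf_eq, symm_lt hm hodd, lt_symm hm hodd]
lemma mem_YH_iff (p : ℝ × ℝ) : p ∈ YH σ ↔
    (0 < p.2 ∧ σ p.1 ≤ -p.2) ∨ (p.2 < 0 ∧ -p.2 ≤ σ p.1) ∨ (p.2 = 0 ∧ p.1 < 0) := by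
  rw [YH, Set.mem_setOf_eq, ← symm_neg hm hodd, le_symm hm hodd, symm_le hm hodd]

section disj
variable {p : ℝ × ℝ}

lemma dXHXV (h1 : p ∈ XH σ) (h2 : p ∈ XV σ) : False := by
  rw [mem_XH_iff hm hodd] at h1
  rcases lt_trichotomy p.1 0 with hu | hu | hu
  · have hs : σ p.1 < 0 := (neg_iff hm hodd _).2 hu
    rcases h1 with ⟨h, h'⟩ | ⟨h, h'⟩ | ⟨h, h'⟩ <;>
      rcases h2 with ⟨g, g'⟩ | ⟨g, g'⟩ | ⟨g, g'⟩ <;> linarith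
  · have hs : σ p.1 = 0 := (zero_iff hm hodd _).2 hu
    rcases h1 with ⟨h, h'⟩ | ⟨h, h'⟩ | ⟨h, h'⟩ <;>
      rcases h2 with ⟨g, g'⟩ | ⟨g, g'⟩ | ⟨g, g'⟩ <;> linarith
  · have hs : 0 < σ p.1 := (pos_iff hm hodd _).2 hu
    rcases h1 with ⟨h, h'⟩ | ⟨h, h'⟩ | ⟨h, h'⟩ <;>
      rcases h2 with ⟨g, g'⟩ | ⟨g, g'⟩ | ⟨g, g'⟩ <;> linarith

lemma dYHYV (h1 : p ∈ YH σ) (h2 : p ∈ YV σ) : False := by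
  rw [mem_YH_iff hm hodd] at h1
  rcases lt_trichotomy p.1 0 with hu | hu | hu
  · have hs : σ p.1 < 0 := (neg_iff hm hodd _).2 hu
    rcases h1 with ⟨h, h'⟩ | ⟨h, h'⟩ | ⟨h, h'⟩ <;>
      rcases h2 with ⟨g, g'⟩ | ⟨g, g'⟩ | ⟨g, g'⟩ <;> linarith
  · have hs : σ p.1 = 0 := (zero_iff hm hodd _).2 hu
    rcases h1 with ⟨h, h'⟩ | ⟨h, h'⟩ | ⟨h, h'⟩ <;>
      rcases h2 with ⟨g, g'⟩ | ⟨g, g'⟩ | ⟨g, g'⟩ <;> linarith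
  · have hs : 0 < σ p.1 := (pos_iff hm hodd _).2 hu
    rcases h1 with ⟨h, h'⟩ | ⟨h, h'⟩ | ⟨h, h'⟩ <;>
      rcases h2 with ⟨g, g'⟩ | ⟨g, g'⟩ | ⟨g, g'⟩ <;> linarith

lemma dXHYV (h1 : p ∈ XH σ) (h2 : p ∈ YV σ) : False := by
  rw [mem_XH_iff hm hodd] at h1
  rcases lt_trichotomy p.1 0 with hu | hu | hu
  · have hs : σ p.1 < 0 := (neg_iff hm hodd _).2 hu
    rcases h1 with ⟨h, h'⟩ | ⟨h, h'⟩ | ⟨h, h'⟩ <;>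
      rcases h2 with ⟨g, g'⟩ | ⟨g, g'⟩ | ⟨g, g'⟩ <;> linarith
  · have hs : σ p.1 = 0 := (zero_iff hm hodd _).2 hu
    rcases h1 with ⟨h, h'⟩ | ⟨h, h'⟩ | ⟨h, h'⟩ <;>
      rcases h2 with ⟨g, g'⟩ | ⟨g, g'⟩ | ⟨g, g'⟩ <;> linarith
  · have hs : 0 < σ p.1 := (pos_iff hm hodd _).2 hu
    rcases h1 with ⟨h, h'⟩ | ⟨h, h'⟩ | ⟨h, h'⟩ <;>
      rcases h2 with ⟨g, g'⟩ | ⟨g, g'⟩ | ⟨g, g'⟩ <;> linarith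

lemma dXVYH (h1 : p ∈ XV σ) (h2 : p ∈ YH σ) : False := by
  rw [mem_YH_iff hm hodd] at h2
  rcases lt_trichotomy p.1 0 with hu | hu | hu
  · have hs : σ p.1 < 0 := (neg_iff hm hodd _).2 hu
    rcases h1 with ⟨h, h'⟩ | ⟨h, h'⟩ | ⟨h, h'⟩ <;>
      rcases h2 with ⟨g, g'⟩ | ⟨g, g'⟩ | ⟨g, g'⟩ <;> linarith
  · have hs : σ p.1 = 0 := (zero_iff hm hodd _).2 hu
    rcases h1 with ⟨h, h'⟩ | ⟨h, h'⟩ | ⟨h, h'⟩ <;>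
      rcases h2 with ⟨g, g'⟩ | ⟨g, g'⟩ | ⟨g, g'⟩ <;> linarith
  · have hs : 0 < σ p.1 := (pos_iff hm hodd _).2 hu
    rcases h1 with ⟨h, h'⟩ | ⟨h, h'⟩ | ⟨h, h'⟩ <;>
      rcases h2 with ⟨g, g'⟩ | ⟨g, g'⟩ | ⟨g, g'⟩ <;> linarith

lemma dXHYH (h1 : p ∈ XH σ) (h2 : p ∈ YH σ) : False := by
  rw [XH, Set.mem_setOf_eq] at h1; rw [YH, Set.mem_setOf_eq] at h2
  have h0 : 0 < p.2 → 0 < σ.symm p.2 := fun h => (spos_iff hm hodd _).2 h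
  have h0' : p.2 < 0 → σ.symm p.2 < 0 := fun h => (sneg_iff hm hodd _).2 h
  rcases h1 with ⟨h, h'⟩ | ⟨h, h'⟩ | ⟨h, h'⟩ <;>
    rcases h2 with ⟨g, g'⟩ | ⟨g, g'⟩ | ⟨g, g'⟩ <;>
    [skip; skip; skip; skip; skip; skip; skip; skip; skip] <;>
    first
      | linarith [h0 (by assumption : (0:ℝ) < p.2)]
      | linarith [h0' (by assumption : p.2 < (0:ℝ))]
      | linarith

lemma dXVYV (h1 : p ∈ XV σ) (h2 : p ∈ YV σ) : False := by
  have h0 : 0 < p.1 → 0 < σ p.1 := fun h => (pos_iff hm hodd _).2 h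
  have h0' : p.1 < 0 → σ p.1 < 0 := fun h => (neg_iff hm hodd _).2 h
  rcases h1 with ⟨h, h'⟩ | ⟨h, h'⟩ | ⟨h, h'⟩ <;>
    rcases h2 with ⟨g, g'⟩ | ⟨g, g'⟩ | ⟨g, g'⟩ <;>
    first
      | linarith [h0 (by assumption : (0:ℝ) < p.1)]
      | linarith [h0' (by assumption : p.1 < (0:ℝ))]
      | linarith

end disj


section maps
variable {p : ℝ × ℝ}

lemma mapXH (hp : p ≠ 0) (h : p ∉ YH σ) : ((p.1 + σ.symm p.2 + σ.symm p.2, p.2) : ℝ × ℝ) ∈ XH σ := by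
  rw [YH, Set.mem_setOf_eq] at h
  push_neg at h
  rw [XH, Set.mem_setOf_eq]
  rcases lt_trichotomy p.2 0 with hy | hy | hy
  · have ht : σ.symm p.2 < 0 := (sneg_iff hm hodd _).2 hy
    have := h.2.1 hy
    right; left
    exact ⟨hy, by simp only; linarith⟩
  · have ht : σ.symm p.2 = 0 := by rw [hy, symm_zero hm hodd]
    have h1 : p.1 ≠ 0 := by
      intro h1
      exact hp (Prod.ext h1 hy)
    have := h.2.2 hy
    right; right
    exact ⟨hy, by simp only [ht]; cases lt_or_gt_of_ne h1 with
      | inl hh => linarith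
      | inr hh => linarith⟩
  · have ht : 0 < σ.symm p.2 := (spos_iff hm hodd _).2 hy
    have := h.1 hy
    left
    exact ⟨hy, by simp only; linarith⟩

lemma mapYH (hp : p ≠ 0) (h : p ∉ XH σ) : ((p.1 - σ.symm p.2 - σ.symm p.2, p.2) : ℝ × ℝ) ∈ YH σ := by
  rw [XH, Set.mem_setOf_eq] at h
  push_neg at h
  rw [YH, Set.mem_setOf_eq]
  rcases lt_trichotomy p.2 0 with hy | hy | hy
  · have ht : σ.symm p.2 < 0 := (sneg_iff hm hodd _).2 hy
    have := h.2.1 hy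
    right; left
    exact ⟨hy, by simp only; linarith⟩
  · have ht : σ.symm p.2 = 0 := by rw [hy, symm_zero hm hodd]
    have h1 : p.1 ≠ 0 := by
      intro h1
      exact hp (Prod.ext h1 hy)
    have := h.2.2 hy
    right; right
    exact ⟨hy, by simp only [ht]; cases lt_or_gt_of_ne h1 with
      | inl hh => linarith
      | inr hh => linarith⟩
  · have ht : 0 < σ.symm p.2 := (spos_iff hm hodd _).2 hy
    have := h.1 hy
    left
    exact ⟨hy, by simp only; linarith⟩

lemma mapXV (hp : p ≠ 0) (h : p ∉ YV σ) : ((p.1, p.2 + σ p.1 + σ p.1) : ℝ × ℝ) ∈ XV σ := by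
  rw [YV, Set.mem_setOf_eq] at h
  push_neg at h
  rw [XV, Set.mem_setOf_eq]
  rcases lt_trichotomy p.1 0 with hx | hx | hx
  · have hs : σ p.1 < 0 := (neg_iff hm hodd _).2 hx
    have := h.2.1 hx
    right; left
    exact ⟨hx, by simp only; linarith⟩
  · have hs : σ p.1 = 0 := by rw [hx, sig_zero hm hodd]
    have h2 : p.2 ≠ 0 := by
      intro h2
      exact hp (Prod.ext hx h2)
    have := h.2.2 hx
    right; right
    exact ⟨hx, by simp only [hs]; cases lt_or_gt_of_ne h2 with
      | inl hh => linarith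
      | inr hh => linarith⟩
  · have hs : 0 < σ p.1 := (pos_iff hm hodd _).2 hx
    have := h.1 hx
    left
    exact ⟨hx, by simp only; linarith⟩

lemma mapYV (hp : p ≠ 0) (h : p ∉ XV σ) : ((p.1, p.2 - σ p.1 - σ p.1) : ℝ × ℝ) ∈ YV σ := by
  rw [XV, Set.mem_setOf_eq] at h
  push_neg at h
  rw [YV, Set.mem_setOf_eq]
  rcases lt_trichotomy p.1 0 with hx | hx | hx
  · have hs : σ p.1 < 0 := (neg_iff hm hodd _).2 hx
    have := h.2.1 hx
    right; left
    exact ⟨hx, by simp only; linarith⟩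
  · have hs : σ p.1 = 0 := by rw [hx, sig_zero hm hodd]
    have h2 : p.2 ≠ 0 := by
      intro h2
      exact hp (Prod.ext hx h2)
    have := h.2.2 hx
    right; right
    exact ⟨hx, by simp only [hs]; cases lt_or_gt_of_ne h2 with
      | inl hh => linarith
      | inr hh => linarith⟩
  · have hs : 0 < σ p.1 := (pos_iff hm hodd _).2 hx
    have := h.1 hx
    left
    exact ⟨hx, by simp only; linarith⟩

end maps

end PingPongAux

/-- The group generated by h_σ² and v_σ² is free on these two generators. -/
theorem stmt_3 (σ : ℝ ≃ ℝ) (hmono : StrictMono σ) (hodd : ∀ x : ℝ, σ (-x) = -σ x) :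
    Function.Injective
      ⇑(FreeGroup.lift (fun b : Bool =>
        if b then ((hmap σ : Equiv.Perm (ℝ × ℝ)) ^ 2) else ((vmap σ : Equiv.Perm (ℝ × ℝ)) ^ 2))) := by
  classical
  have hs0 : σ.symm 0 = 0 := PingPongAux.symm_zero hmono hodd
  have hσ0 : σ 0 = 0 := PingPongAux.sig_zero hmono hodd
  set H : Equiv.Perm (ℝ × ℝ) := (hmap σ : Equiv.Perm (ℝ × ℝ)) ^ 2 with hH
  set V : Equiv.Perm (ℝ × ℝ) := (vmap σ : Equiv.Perm (ℝ × ℝ)) ^ 2 with hV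
  have h1 : ∀ p : ℝ × ℝ, (hmap σ : Equiv.Perm (ℝ × ℝ)) p = (p.1 + σ.symm p.2, p.2) :=
    fun p => rfl
  have h1' : ∀ p : ℝ × ℝ, ((hmap σ : Equiv.Perm (ℝ × ℝ)))⁻¹ p = (p.1 - σ.symm p.2, p.2) :=
    fun p => rfl
  have h2 : ∀ p : ℝ × ℝ, (vmap σ : Equiv.Perm (ℝ × ℝ)) p = (p.1, p.2 + σ p.1) :=
    fun p => rfl
  have h2' : ∀ p : ℝ × ℝ, ((vmap σ : Equiv.Perm (ℝ × ℝ)))⁻¹ p = (p.1, p.2 - σ p.1) :=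
    fun p => rfl
  have hHapp : ∀ p : ℝ × ℝ, H p = (p.1 + σ.symm p.2 + σ.symm p.2, p.2) := by
    intro p
    rw [hH, pow_two, Equiv.Perm.mul_apply, h1, h1]
  have hHinv : ∀ p : ℝ × ℝ, H⁻¹ p = (p.1 - σ.symm p.2 - σ.symm p.2, p.2) := by
    intro p
    rw [hH, ← inv_pow, pow_two, Equiv.Perm.mul_apply, h1', h1']
  have hVapp : ∀ p : ℝ × ℝ, V p = (p.1, p.2 + σ p.1 + σ p.1) := by
    intro p
    rw [hV, pow_two, Equiv.Perm.mul_apply, h2, h2]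
  have hVinv : ∀ p : ℝ × ℝ, V⁻¹ p = (p.1, p.2 - σ p.1 - σ p.1) := by
    intro p
    rw [hV, ← inv_pow, pow_two, Equiv.Perm.mul_apply, h2', h2']
  have hH0 : H 0 = 0 := by rw [hHapp]; simp [hs0]
  have hV0 : V 0 = 0 := by rw [hVapp]; simp [hσ0]
  have hpH : ∀ q : ℝ × ℝ, q ≠ 0 ↔ H q ≠ 0 := by
    intro q
    apply not_congr
    constructor
    · rintro rfl; exact hH0
    · intro h; have : H q = H 0 := by rw [h, hH0]
      exact H.injective this
  have hpV : ∀ q : ℝ × ℝ, q ≠ 0 ↔ V q ≠ 0 := by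
    intro q
    apply not_congr
    constructor
    · rintro rfl; exact hV0
    · intro h; have : V q = V 0 := by rw [h, hV0]
      exact V.injective this
  let f : {q : ℝ × ℝ // q ≠ 0} ≃ Subtype (fun q : ℝ × ℝ => q ≠ 0) := Equiv.refl _
  let bH : Equiv.Perm {q : ℝ × ℝ // q ≠ 0} := H.subtypePerm (fun q => (hpH q).symm)
  let bV : Equiv.Perm {q : ℝ × ℝ // q ≠ 0} := V.subtypePerm (fun q => (hpV q).symm)
  let b : Bool → Equiv.Perm {q : ℝ × ℝ // q ≠ 0} := fun i => if i then bH else bV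
  have hext : ∀ (e : Equiv.Perm (ℝ × ℝ)) (he : e 0 = 0) (hp : ∀ q : ℝ × ℝ, q ≠ 0 ↔ e q ≠ 0),
      (e.subtypePerm (fun q => (hp q).symm)).extendDomain f = e := by
    intro e he hp
    apply Equiv.ext
    intro q
    by_cases hq : q ≠ 0
    · rw [Equiv.Perm.extendDomain_apply_subtype _ f hq]
      rfl
    · rw [Equiv.Perm.extendDomain_apply_not_subtype _ f hq]
      push_neg at hq
      rw [hq, he]
  have key : (FreeGroup.lift (fun b : Bool =>
        if b then ((hmap σ : Equiv.Perm (ℝ × ℝ)) ^ 2) else ((vmap σ : Equiv.Perm (ℝ × ℝ)) ^ 2)))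
      = (Equiv.Perm.extendDomainHom f).comp (FreeGroup.lift b) := by
    apply FreeGroup.ext_hom
    intro i
    rw [MonoidHom.comp_apply, FreeGroup.lift_apply_of, FreeGroup.lift_apply_of]
    cases i
    · show V = Equiv.Perm.extendDomainHom f bV
      exact (hext V hV0 hpV).symm
    · show H = Equiv.Perm.extendDomainHom f bH
      exact (hext H hH0 hpH).symm
  rw [key, MonoidHom.coe_comp]
  refine (Equiv.Perm.extendDomainHom_injective f).comp ?_
  let X : Bool → Set {q : ℝ × ℝ // q ≠ 0} :=
    fun i => if i then {q | q.1 ∈ PingPongAux.XH σ} else {q | q.1 ∈ PingPongAux.XV σ}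
  let Y : Bool → Set {q : ℝ × ℝ // q ≠ 0} :=
    fun i => if i then {q | q.1 ∈ PingPongAux.YH σ} else {q | q.1 ∈ PingPongAux.YV σ}
  have dXX : Disjoint (X true) (X false) := by
    rw [Set.disjoint_left]
    intro q hq hq'
    exact PingPongAux.dXHXV hmono hodd hq hq'
  have dYY : Disjoint (Y true) (Y false) := by
    rw [Set.disjoint_left]
    intro q hq hq'
    exact PingPongAux.dYHYV hmono hodd hq hq'
  have dXY : ∀ i j, Disjoint (X i) (Y j) := by
    intro i j
    rw [Set.disjoint_left]
    cases i <;> cases j <;> intro q hq hq'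
    · exact PingPongAux.dXVYV hmono hodd hq hq'
    · exact PingPongAux.dXVYH hmono hodd hq hq'
    · exact PingPongAux.dXHYV hmono hodd hq hq'
    · exact PingPongAux.dXHYH hmono hodd hq hq'
  apply FreeGroup.injective_lift_of_ping_pong b X Y
  · intro i
    cases i
    · exact ⟨⟨(0, 1), by simp [Prod.ext_iff]⟩, by
        show ((0 : ℝ), (1 : ℝ)) ∈ PingPongAux.XV σ
        right; right; exact ⟨rfl, one_pos⟩⟩
    · exact ⟨⟨(1, 0), by simp [Prod.ext_iff]⟩, by
        show ((1 : ℝ), (0 : ℝ)) ∈ PingPongAux.XH σ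
        right; right; exact ⟨rfl, one_pos⟩⟩
  · intro i j hij
    cases i <;> cases j
    · exact absurd rfl hij
    · exact dXX.symm
    · exact dXX
    · exact absurd rfl hij
  · intro i j hij
    cases i <;> cases j
    · exact absurd rfl hij
    · exact dYY.symm
    · exact dYY
    · exact absurd rfl hij
  · exact dXY
  · intro i q hq
    rw [Set.mem_smul_set] at hq
    obtain ⟨r, hr, rfl⟩ := hq
    have hr1 : r.1 ≠ (0 : ℝ × ℝ) := r.2
    cases i
    · show ((bV r : {q : ℝ × ℝ // q ≠ 0}) : {q : ℝ × ℝ // q ≠ 0}).1 ∈ PingPongAux.XV σ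
      have : (bV r).1 = V r.1 := rfl
      rw [this, hVapp]
      exact PingPongAux.mapXV hmono hodd hr1 hr
    · show (bH r).1 ∈ PingPongAux.XH σ
      have : (bH r).1 = H r.1 := rfl
      rw [this, hHapp]
      exact PingPongAux.mapXH hmono hodd hr1 hr
  · intro i q hq
    rw [Set.mem_smul_set] at hq
    obtain ⟨r, hr, rfl⟩ := hq
    have hr1 : r.1 ≠ (0 : ℝ × ℝ) := r.2
    cases i
    · show (bV⁻¹ r).1 ∈ PingPongAux.YV σ
      have : (bV⁻¹ r).1 = V⁻¹ r.1 := rfl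
      rw [this, hVinv]
      exact PingPongAux.mapYV hmono hodd hr1 hr
    · show (bH⁻¹ r).1 ∈ PingPongAux.YH σ
      have : (bH⁻¹ r).1 = H⁻¹ r.1 := rfl
      rw [this, hHinv]
      exact PingPongAux.mapYH hmono hodd hr1 hr
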